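/- arXiv:1902.04460 — 3 statements merged into one kernel-verified Lean document; each statement's English description precedes it below -/
import Mathlib

section
/- Let m ≥ 1 be an integer and ε > 0. Then there exists a constant C > 0, depending only on m and ε, such that for every sequence (x_j)_{j=1}^∞ of points of the unit sphere S^m ⊂ ℝ^{m+1}, there exists a point y ∈ S^m with |y − x_j| ≥ C · j^{−(1/m + ε)} for every j ≥ 1 (distance measured in the Euclidean norm of ℝ^{m+1}). -/
open Metric Filter MeasureTheory Asymptotics

noncomputable section

/-- `ℝⁿ` as a Euclidean space. -/
abbrev En (n : ℕ) := EuclideanSpace ℝ (Fin n)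

/-- The Euclidean group `E(n)`, i.e. the isometry group of `ℝⁿ`. -/
abbrev Isom (n : ℕ) := En n ≃ᵢ En n

/-- The translation part `tran γ = γ 0` of a Euclidean isometry
(for `γ : x ↦ Ax + a` this is `a`). -/
def tran {n : ℕ} (γ : Isom n) : En n := γ 0

/-- The orthogonal part `ort γ` of a Euclidean isometry, as a self-map of `ℝⁿ`
(for `γ : x ↦ Ax + a` this is the map `x ↦ Ax`). -/
def ort {n : ℕ} (γ : Isom n) : En n → En n := fun x => γ x - γ 0

/-- A subgroup `Γ ≤ E(n)` is discrete (in the topology of `O(n) × ℝⁿ`) if and only if the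
identity is isolated in `Γ`; the metric `sup_{‖x‖ ≤ 1} ‖γ x - x‖` induces that topology. -/
def IsDiscreteSubgroup {n : ℕ} (Γ : Subgroup (Isom n)) : Prop :=
  ∃ ε > 0, ∀ γ ∈ Γ, γ ≠ 1 → ∃ x : En n, ‖x‖ ≤ 1 ∧ ε ≤ dist (γ x) x

/-- The subgroup of all translations of `ℝⁿ` inside the isometry group; the translation
subgroup `Γ_T` of a subgroup `Γ ≤ E(n)` is then `Γ ⊓ Translations n`. -/
def Translations (n : ℕ) : Subgroup (Isom n) where
  carrier := {γ : Isom n | ∀ x : En n, γ x = x + γ 0}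
  one_mem' := by intro x; simp
  mul_mem' := by
    intro a b ha hb x
    show a (b x) = x + a (b 0)
    rw [hb x, ha (x + b 0), hb 0, ha (0 + b 0)]
    abel
  inv_mem' := by
    intro a ha x
    show a.symm x = x + a.symm 0
    apply a.injective
    have h0 : a (a.symm 0) = 0 := a.apply_symm_apply 0
    rw [a.apply_symm_apply, ha (x + a.symm 0)]
    have hsum : a.symm 0 + a 0 = 0 := by
      have := ha (a.symm 0); rw [h0] at this; exact this.symm
    rw [add_assoc, hsum, add_zero]

/-- `(G, V)` is a cocompact translation pair of `Γ`: `G ≤ Γ`, `V` is a (nonempty) affine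
subspace of `ℝⁿ` with `GV = V`, every `g ∈ G` restricts to `V` as a translation
(by the vector `v = tran_V(g)`), and `V/G` is compact. -/
structure IsCocompactTranslationPair {n : ℕ} (Γ G : Subgroup (Isom n))
    (V : AffineSubspace ℝ (En n)) : Prop where
  le : G ≤ Γ
  nonempty : (V : Set (En n)).Nonempty
  invariant : ∀ g ∈ G, ∀ x ∈ (V : Set (En n)), g x ∈ (V : Set (En n))
  translation : ∀ g ∈ G, ∃ v : En n, ∀ x ∈ (V : Set (En n)), g x = x + v
  cocompact : ∃ K : Set (En n), IsCompact K ∧ K ⊆ (V : Set (En n)) ∧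
    ∀ x ∈ (V : Set (En n)), ∃ g ∈ G, g x ∈ K

/-- `N_Γ(r)`: the number of `γ ∈ Γ` with `|tran γ| ≤ r`. -/
def NCount {n : ℕ} (Γ : Subgroup (Isom n)) (r : ℝ) : ℕ :=
  {γ : Isom n | γ ∈ Γ ∧ ‖tran γ‖ ≤ r}.ncard

/-- `N_G^V(r)`: the number of `γ ∈ G` whose translation vector `tran_V γ` on `V`
satisfies `|tran_V γ| ≤ r`. -/
def NVCount {n : ℕ} (G : Subgroup (Isom n)) (V : AffineSubspace ℝ (En n)) (r : ℝ) : ℕ :=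
  {γ : Isom n | γ ∈ G ∧ ∃ v : En n,
    (∀ x ∈ (V : Set (En n)), γ x = x + v) ∧ ‖v‖ ≤ r}.ncard

/-- `Λ_G(r)`: the number of distinct orthogonal parts `ort γ` over `γ ∈ G` with
`|tran γ| ≤ r`. -/
def LamCount {n : ℕ} (G : Subgroup (Isom n)) (r : ℝ) : ℕ :=
  {f : En n → En n | ∃ γ, γ ∈ G ∧ ‖tran γ‖ ≤ r ∧ f = ort γ}.ncard

/-- `Λ_G^V(r)`: the number of distinct orthogonal parts `ort γ` over `γ ∈ G` with
`|tran_V γ| ≤ r`. -/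
def LamVCount {n : ℕ} (G : Subgroup (Isom n)) (V : AffineSubspace ℝ (En n)) (r : ℝ) : ℕ :=
  {f : En n → En n | ∃ γ, γ ∈ G ∧
    (∃ v : En n, (∀ x ∈ (V : Set (En n)), γ x = x + v) ∧ ‖v‖ ≤ r) ∧ f = ort γ}.ncard

open ENNReal in
lemma needle_cover {m : ℕ} (x : En (m+1)) (hx : ‖x‖ = 1) {r : ℝ} (hr : 0 < r) :
    {z : En (m+1) | ‖z‖ ≤ 1 ∧ ‖z - ‖z‖ • x‖ ≤ r} ⊆
      ⋃ k ∈ Finset.range (⌈1/r⌉₊ + 1), ball ((k * r) • x) (2*r) := by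
  intro z hz
  obtain ⟨hz1, hz2⟩ := hz
  set t := ‖z‖ with ht
  have ht0 : 0 ≤ t := norm_nonneg z
  set k := ⌊t / r⌋₊ with hk
  have hk1 : (k : ℝ) * r ≤ t := by
    have := Nat.floor_le (div_nonneg ht0 hr.le) (R := ℝ)
    calc (k:ℝ) * r ≤ (t/r) * r := by nlinarith
    _ = t := by field_simp
  have hk2 : t < (k:ℝ) * r + r := by
    have := Nat.lt_floor_add_one (t / r)
    calc t = (t/r)*r := by field_simp
    _ < ((k:ℝ)+1)*r := by nlinarith
    _ = (k:ℝ)*r + r := by ring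
  have hkK : k ∈ Finset.range (⌈1/r⌉₊ + 1) := by
    refine Finset.mem_range.2 (Nat.lt_succ_of_le ?_)
    exact le_trans (Nat.floor_le_ceil _) (Nat.ceil_le_ceil (by gcongr))
  refine Set.mem_biUnion hkK ?_
  have : ‖z - ((k:ℝ) * r) • x‖ < 2 * r := by
    have h3 : ‖(t - (k:ℝ)*r) • x‖ = t - (k:ℝ)*r := by
      rw [norm_smul, hx, mul_one, Real.norm_eq_abs, abs_of_nonneg (by linarith)]
    calc ‖z - ((k:ℝ) * r) • x‖ = ‖(z - t • x) + (t - (k:ℝ)*r) • x‖ := by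
          congr 1; rw [sub_smul]; abel
    _ ≤ ‖z - t • x‖ + ‖(t - (k:ℝ)*r) • x‖ := norm_add_le _ _
    _ < 2 * r := by rw [h3]; linarith
  simpa [mem_ball, dist_eq_norm] using this

open ENNReal in
lemma needle_vol {m : ℕ} (x : En (m+1)) (hx : ‖x‖ = 1) {r : ℝ} (hr : 0 < r) (hr1 : r ≤ 1)
    :
    volume {z : En (m+1) | ‖z‖ ≤ 1 ∧ ‖z - ‖z‖ • x‖ ≤ r} ≤
      ENNReal.ofReal (3 * 2^(m+1) * r^m) * volume (ball (0 : En (m+1)) 1) := by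
  have hcov := needle_cover x hx hr
  set B := volume (ball (0 : En (m+1)) 1)
  have hball : ∀ k : ℕ, volume (ball (((k:ℝ) * r) • x) (2*r)) = ENNReal.ofReal ((2*r)^(m+1)) * B := by
    intro k
    rw [Measure.addHaar_ball volume _ (by linarith), finrank_euclideanSpace_fin]
  calc volume {z : En (m+1) | ‖z‖ ≤ 1 ∧ ‖z - ‖z‖ • x‖ ≤ r}
      ≤ volume (⋃ k ∈ Finset.range (⌈1/r⌉₊ + 1), ball ((k * r) • x) (2*r)) := measure_mono hcov
    _ ≤ ∑ k ∈ Finset.range (⌈1/r⌉₊ + 1), volume (ball (((k:ℝ) * r) • x) (2*r)) :=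
        measure_biUnion_finset_le _ _
    _ = (⌈1/r⌉₊ + 1) * (ENNReal.ofReal ((2*r)^(m+1)) * B) := by
        simp [hball, Finset.sum_const, nsmul_eq_mul]
    _ ≤ ENNReal.ofReal (3 * 2^(m+1) * r^m) * B := by
        rw [← mul_assoc]
        gcongr
        have h1 : ((⌈1/r⌉₊ : ℝ≥0∞) + 1) = ENNReal.ofReal ((⌈1/r⌉₊ : ℝ) + 1) := by
          rw [ENNReal.ofReal_add (by positivity) zero_le_one]
          simp
        rw [h1, ← ENNReal.ofReal_mul (by positivity)]
        apply ENNReal.ofReal_le_ofReal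
        have hceil : (⌈1/r⌉₊ : ℝ) ≤ 1/r + 1 := (Nat.ceil_lt_add_one (by positivity)).le
        have hpow : r^(m+1) ≤ r^m := pow_le_pow_of_le_one hr.le hr1 (by omega)
        have key : (1/r + 2) * (2*r)^(m+1) ≤ 3 * 2^(m+1) * r^m := by
          have : (2*r)^(m+1) = 2^(m+1) * r^(m+1) := by rw [mul_pow]
          rw [this]
          have hrm : r^(m+1) = r^m * r := by ring
          have h2 : (1/r) * (2^(m+1) * r^(m+1)) = 2^(m+1) * r^m := by
            rw [hrm]; field_simp
          nlinarith [pow_pos (show (0:ℝ) < 2 by norm_num) (m+1), pow_pos hr m]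
        calc ((⌈1/r⌉₊:ℝ) + 1) * (2*r)^(m+1) ≤ (1/r + 2) * (2*r)^(m+1) := by
              have : (0:ℝ) ≤ (2*r)^(m+1) := by positivity
              nlinarith
          _ ≤ 3 * 2^(m+1) * r^m := key

open ENNReal in
/-- For `m ≥ 1` and `ε > 0` there is `C > 0` (depending only on `m, ε`)
such that for every sequence `(x_j)` on the unit sphere `S^m ⊂ ℝ^{m+1}` there is a point
`y ∈ S^m` with `|y − x_j| ≥ C · j^{−(1/m + ε)}` for every `j ≥ 1`. -/
theorem sphere_filling_estimate (m : ℕ) (hm : 1 ≤ m) (ε : ℝ) (hε : 0 < ε) :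
    ∃ C : ℝ, 0 < C ∧ ∀ x : ℕ → EuclideanSpace ℝ (Fin (m + 1)),
      (∀ j : ℕ, ‖x j‖ = 1) →
      ∃ y : EuclideanSpace ℝ (Fin (m + 1)), ‖y‖ = 1 ∧
        ∀ j : ℕ, 1 ≤ j → C * (j : ℝ) ^ (-(1 / (m : ℝ) + ε)) ≤ ‖y - x j‖ := by
  have hm0 : (0:ℝ) < m := by exact_mod_cast hm
  set p : ℝ := 1 / m + ε with hp
  have hp0 : 0 < p := by positivity
  set f : ℕ → ℝ := fun j => (j:ℝ) ^ (-(1 + m * ε)) with hf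
  have hfsum : Summable f := by
    apply Real.summable_nat_rpow.2
    nlinarith
  set S : ℝ := ∑' j, f j with hS
  have hS0 : 0 ≤ S := tsum_nonneg fun j => Real.rpow_nonneg (Nat.cast_nonneg j) _
  set D : ℝ := 3 * 2^(m+1) with hD
  have hD0 : 0 < D := by positivity
  set C : ℝ := min 1 (1 / (D * (S + 1))) with hC
  have hC0 : 0 < C := lt_min one_pos (by positivity)
  have hC1 : C ≤ 1 := min_le_left _ _
  refine ⟨C, hC0, fun x hx => ?_⟩
  by_contra hcon
  push_neg at hcon
  -- the needles
  set r : ℕ → ℝ := fun j => C * (j:ℝ) ^ (-p) with hr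
  set T : ℕ → Set (En (m+1)) := fun j =>
    if j = 0 then ∅ else {z | ‖z‖ ≤ 1 ∧ ‖z - ‖z‖ • (x j)‖ ≤ r j} with hT
  set B : ℝ≥0∞ := volume (ball (0 : En (m+1)) 1) with hB
  have hBpos : 0 < B := measure_ball_pos _ _ one_pos
  have hBtop : B < ⊤ := measure_ball_lt_top
  -- the closed unit ball is covered
  have hcover : closedBall (0 : En (m+1)) 1 ⊆ {0} ∪ ⋃ j, T j := by
    intro z hz
    rcases eq_or_ne z 0 with h0 | h0
    · exact Or.inl h0
    · have hz1 : ‖z‖ ≤ 1 := by simpa [dist_zero_right] using hz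
      have hzn : (0:ℝ) < ‖z‖ := norm_pos_iff.2 h0
      set y : En (m+1) := ‖z‖⁻¹ • z with hy
      have hy1 : ‖y‖ = 1 := by
        rw [hy, norm_smul, norm_inv, norm_norm, inv_mul_cancel₀ hzn.ne']
      obtain ⟨j, hj1, hjlt⟩ := hcon y hy1
      refine Or.inr (Set.mem_iUnion.2 ⟨j, ?_⟩)
      have hj0 : j ≠ 0 := by omega
      rw [hT]
      simp only [hj0, if_false, Set.mem_setOf_eq]
      refine ⟨hz1, ?_⟩
      have hzy : ‖z‖ • y = z := by
        rw [hy, smul_smul, mul_inv_cancel₀ hzn.ne', one_smul]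
      calc ‖z - ‖z‖ • x j‖ = ‖‖z‖ • (y - x j)‖ := by rw [smul_sub, hzy]
        _ = ‖z‖ * ‖y - x j‖ := by rw [norm_smul, norm_norm]
        _ ≤ 1 * ‖y - x j‖ := by gcongr
        _ ≤ r j := by rw [one_mul]; exact hjlt.le
  -- per-needle volume bound
  have hrpos : ∀ j : ℕ, 1 ≤ j → 0 < r j := by
    intro j hj
    have : (0:ℝ) < (j:ℝ) := by exact_mod_cast hj
    exact mul_pos hC0 (Real.rpow_pos_of_pos this _)
  have hr1 : ∀ j : ℕ, 1 ≤ j → r j ≤ 1 := by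
    intro j hj
    have hj1 : (1:ℝ) ≤ (j:ℝ) := by exact_mod_cast hj
    have : (j:ℝ) ^ (-p) ≤ 1 :=
      Real.rpow_le_one_of_one_le_of_nonpos hj1 (by linarith)
    calc C * (j:ℝ)^(-p) ≤ 1 * 1 := by
          apply mul_le_mul hC1 this (Real.rpow_nonneg (by positivity) _) zero_le_one
      _ = 1 := one_mul 1
  have hrm : ∀ j : ℕ, 1 ≤ j → (r j)^m = C^m * f j := by
    intro j hj
    have hj0 : (0:ℝ) ≤ (j:ℝ) := Nat.cast_nonneg j
    rw [hr]
    simp only [mul_pow]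
    congr 1
    rw [← Real.rpow_natCast ((j:ℝ) ^ (-p)) m, ← Real.rpow_mul hj0]
    congr 1
    have hpm : p * m = 1 + m * ε := by
      rw [hp, add_mul, one_div, inv_mul_cancel₀ hm0.ne']; ring
    linear_combination -hpm
  set a : ℕ → ℝ := fun j => D * C^m * f j with ha
  have hTvol : ∀ j : ℕ, volume (T j) ≤ ENNReal.ofReal (a j) * B := by
    intro j
    rcases Nat.eq_zero_or_pos j with h0 | h1
    · simp [hT, h0]
    · rw [hT]
      simp only [Nat.pos_iff_ne_zero.1 h1, if_false]
      calc volume {z : En (m+1) | ‖z‖ ≤ 1 ∧ ‖z - ‖z‖ • (x j)‖ ≤ r j}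
          ≤ ENNReal.ofReal (3 * 2^(m+1) * (r j)^m) * B :=
            needle_vol (x j) (hx j) (hrpos j h1) (hr1 j h1)
        _ = ENNReal.ofReal (a j) * B := by rw [hrm j h1, ha, hD]; ring_nf
  -- summing up
  have hasum : Summable a := hfsum.mul_left _
  have ha0 : ∀ j, 0 ≤ a j := fun j =>
    mul_nonneg (mul_nonneg hD0.le (pow_nonneg hC0.le m)) (Real.rpow_nonneg (Nat.cast_nonneg j) _)
  have hchain : B ≤ ENNReal.ofReal (D * C^m * S) * B := by
    calc B = volume (closedBall (0 : En (m+1)) 1) := by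
          rw [hB, Measure.addHaar_closedBall volume _ zero_le_one,
            Measure.addHaar_ball volume _ zero_le_one]
          simp
      _ ≤ volume ({(0 : En (m+1))} ∪ ⋃ j, T j) := measure_mono hcover
      _ ≤ volume ({(0 : En (m+1))} : Set (En (m+1))) + volume (⋃ j, T j) := measure_union_le _ _
      _ = volume (⋃ j, T j) := by
          have : volume ({(0 : En (m+1))} : Set (En (m+1))) = 0 := by
            have h1 : ({(0 : En (m+1))} : Set (En (m+1))) = closedBall 0 0 := by
              simp
            rw [h1, Measure.addHaar_closedBall volume _ le_rfl]
            simp [finrank_euclideanSpace_fin]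
          rw [this, zero_add]
      _ ≤ ∑' j, volume (T j) := measure_iUnion_le _
      _ ≤ ∑' j, ENNReal.ofReal (a j) * B := ENNReal.tsum_le_tsum hTvol
      _ = (∑' j, ENNReal.ofReal (a j)) * B := ENNReal.tsum_mul_right
      _ = ENNReal.ofReal (∑' j, a j) * B := by
          rw [ENNReal.ofReal_tsum_of_nonneg ha0 hasum]
      _ = ENNReal.ofReal (D * C^m * S) * B := by rw [ha, tsum_mul_left]
  -- but D * C^m * S < 1
  have hsmall : D * C^m * S < 1 := by
    have hCm : C^m ≤ C := by
      calc C^m ≤ C^1 := pow_le_pow_of_le_one hC0.le hC1 hm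
        _ = C := pow_one C
    have hC2 : C ≤ 1 / (D * (S + 1)) := min_le_right _ _
    have h1 : D * C^m * S ≤ D * C * S :=
      mul_le_mul_of_nonneg_right (mul_le_mul_of_nonneg_left hCm hD0.le) hS0
    have h2 : D * C * S ≤ S / (S + 1) := by
      rw [div_eq_mul_inv]
      have : D * C * S ≤ D * (1 / (D * (S+1))) * S :=
        mul_le_mul_of_nonneg_right (mul_le_mul_of_nonneg_left hC2 hD0.le) hS0
      calc D * C * S ≤ D * (1 / (D * (S+1))) * S := this
        _ = S * (S+1)⁻¹ := by field_simp
    have h3 : S / (S + 1) < 1 := by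
      rw [div_lt_one (by linarith)]; linarith
    linarith
  have hlt : ENNReal.ofReal (D * C^m * S) * B < B := by
    have h1 : ENNReal.ofReal (D * C^m * S) < 1 := ENNReal.ofReal_lt_one.2 hsmall
    calc ENNReal.ofReal (D * C^m * S) * B < 1 * B :=
          ENNReal.mul_lt_mul_left hBpos.ne' hBtop.ne h1
      _ = B := one_mul B
  exact absurd hchain (not_le.2 hlt)
end
end

section
/- Let Γ be a discrete subgroup of E(n), and let (G, V) be a cocompact translation pair of Γ such that G is abelian and V is a linear subspace with k = dim V < n − 2. Then there exist unit vectors u₁, u₂ in the orthogonal complement V^⊥ of V with the following property: if σ : [0,1] → ℝⁿ is a path (of finite total variation) with σ(0) ∈ L₁ = [0,∞)u₁ and σ(1) ∈ ⋃_{γ∈G} γ(L₂) where L₂ = [0,∞)u₂, and if s = inf_{t∈[0,1]} d(σ(t), V) > 0, then the length (total variation) of σ is at least √2 · s. -/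
open Metric Filter MeasureTheory Asymptotics

noncomputable section

section InvariantSubspace

open Module Submodule

variable {E : Type*} [NormedAddCommGroup E] [InnerProductSpace ℝ E] [FiniteDimensional ℝ E]

local notation "⟪" x ", " y "⟫" => @inner ℝ _ _ x y

lemma finrank_span_singleton_le' (v : E) : finrank ℝ (ℝ ∙ v) ≤ 1 := by
  by_cases hv : v = 0
  · rw [hv, Submodule.span_zero_singleton, finrank_bot]
    omega
  · rw [finrank_span_singleton hv]

/-- A commuting family of linear isometries of a finite-dimensional real inner product
space leaves invariant a nonzero subspace of dimension at most 2 inside any given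
nonzero invariant subspace. -/
lemma exists_small_invariant_subspace
    (S : Set (E ≃ₗᵢ[ℝ] E))
    (hcomm : ∀ a ∈ S, ∀ b ∈ S, ∀ x : E, a (b x) = b (a x))
    (W₀ : Submodule ℝ E) (hW₀ : W₀ ≠ ⊥)
    (hW₀inv : ∀ a ∈ S, ∀ x ∈ W₀, a x ∈ W₀) :
    ∃ U : Submodule ℝ E, U ≤ W₀ ∧ U ≠ ⊥ ∧ Module.finrank ℝ U ≤ 2 ∧
      ∀ a ∈ S, ∀ x ∈ U, a x ∈ U := by
  classical
  have hDne : ∃ d, ∃ U : Submodule ℝ E,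
      (U ≤ W₀ ∧ U ≠ ⊥ ∧ ∀ a ∈ S, ∀ x ∈ U, a x ∈ U) ∧ finrank ℝ U = d :=
    ⟨_, W₀, ⟨le_rfl, hW₀, hW₀inv⟩, rfl⟩
  obtain ⟨U, ⟨hUW₀, hUne, hUinv⟩, hUrank⟩ := Nat.find_spec hDne
  -- minimality of U
  have hmin : ∀ U' : Submodule ℝ E, U' ≤ U → U' ≠ ⊥ →
      (∀ a ∈ S, ∀ x ∈ U', a x ∈ U') → U' = U := by
    intro U' hle hne hinv
    have h1 : ¬ finrank ℝ U' < Nat.find hDne :=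
      fun h => Nat.find_min hDne h ⟨U', ⟨hle.trans hUW₀, hne, hinv⟩, rfl⟩
    exact Submodule.eq_of_le_of_finrank_le hle (by omega)
  -- U is invariant under inverses
  have hU_symm : ∀ a ∈ S, ∀ x ∈ U, a.symm x ∈ U := by
    intro a ha x hx
    have hmap : U.map (a.toLinearEquiv : E →ₗ[ℝ] E) = U := by
      apply Submodule.eq_of_le_of_finrank_le
      · rintro _ ⟨y, hy, rfl⟩
        exact hUinv a ha y hy
      · rw [LinearEquiv.finrank_map_eq]
    rw [← hmap] at hx
    obtain ⟨y, hy, hxy⟩ := hx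
    have : a.symm x = y := by
      apply a.injective
      rw [a.apply_symm_apply]
      exact hxy.symm
    rwa [this]
  -- zero divisor lemma on U
  have hzd : ∀ f g : E →ₗ[ℝ] E,
      (∀ x ∈ U, f x ∈ U) → (∀ a ∈ S, ∀ x : E, f (a x) = a (f x)) →
      (∀ x ∈ U, g x ∈ U) → (∀ a ∈ S, ∀ x : E, g (a x) = a (g x)) →
      (∀ x ∈ U, f (g x) = 0) →
      (∀ x ∈ U, f x = 0) ∨ (∀ x ∈ U, g x = 0) := by
    intro f g hfU hfS hgU hgS hfg
    by_cases hf : ∀ x ∈ U, f x = 0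
    · exact Or.inl hf
    right
    push_neg at hf
    obtain ⟨x₀, hx₀U, hx₀⟩ := hf
    have hK : LinearMap.ker f ⊓ U = ⊥ := by
      by_contra hKne
      have hKU : LinearMap.ker f ⊓ U = U := by
        apply hmin _ inf_le_right hKne
        intro a ha x hx
        rw [Submodule.mem_inf] at hx ⊢
        refine ⟨?_, hUinv a ha x hx.2⟩
        rw [LinearMap.mem_ker] at hx ⊢
        rw [hfS a ha x, hx.1, map_zero]
      have hx₀' : x₀ ∈ LinearMap.ker f ⊓ U := hKU.symm ▸ hx₀U
      exact hx₀ ((Submodule.mem_inf.mp hx₀').1)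
    intro x hx
    have h1 : g x ∈ LinearMap.ker f ⊓ U :=
      Submodule.mem_inf.mpr ⟨LinearMap.mem_ker.mpr (hfg x hx), hgU x hx⟩
    rw [hK] at h1
    exact h1
  haveI : Nontrivial U := Submodule.nontrivial_iff_ne_bot.mpr hUne
  -- every element of S satisfies a quadratic relation on U
  have hquad : ∀ a ∈ S, ∃ μ : ℝ, ∀ x ∈ U, a (a x) + x = μ • a x := by
    intro a ha
    set A : E →ₗ[ℝ] E := (a.toLinearEquiv : E →ₗ[ℝ] E) with hA
    set B : E →ₗ[ℝ] E := (a.symm.toLinearEquiv : E →ₗ[ℝ] E) with hB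
    have hAx : ∀ x : E, A x = a x := fun _ => rfl
    have hBx : ∀ x : E, B x = a.symm x := fun _ => rfl
    set c : E →ₗ[ℝ] E := A + B with hc
    have hcx : ∀ x : E, c x = a x + a.symm x := fun _ => rfl
    have hcU : ∀ x ∈ U, c x ∈ U := by
      intro x hx
      rw [hcx]
      exact U.add_mem (hUinv a ha x hx) (hU_symm a ha x hx)
    have hsymmcomm : ∀ b ∈ S, ∀ x : E, a.symm (b x) = b (a.symm x) := by
      intro b hb x
      apply a.injective
      rw [a.apply_symm_apply, hcomm a ha b hb (a.symm x), a.apply_symm_apply]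
    have hcS : ∀ b ∈ S, ∀ x : E, c (b x) = b (c x) := by
      intro b hb x
      rw [hcx, hcx, hcomm a ha b hb x, hsymmcomm b hb x, ← map_add]
    set cU : U →ₗ[ℝ] U := c.restrict hcU with hcUdef
    have hcUapp : ∀ x : U, (cU x : E) = c (x : E) := fun x => rfl
    have hsym : cU.IsSymmetric := by
      intro x y
      rw [Submodule.coe_inner, Submodule.coe_inner, hcUapp, hcUapp, hcx, hcx]
      have h1 : ⟪a (x : E), (y : E)⟫ = ⟪(x : E), a.symm (y : E)⟫ := by
        have h3 := a.inner_map_map (x : E) (a.symm (y : E))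
        rw [a.apply_symm_apply] at h3
        exact h3
      have h2 : ⟪a.symm (x : E), (y : E)⟫ = ⟪(x : E), a (y : E)⟫ := by
        have h3 := a.inner_map_map (a.symm (x : E)) (y : E)
        rw [a.apply_symm_apply] at h3
        exact h3.symm
      rw [inner_add_left, inner_add_right, h1, h2]
      ring
    obtain ⟨μ, hμ⟩ : ∃ μ : ℝ, Module.End.HasEigenvalue cU μ :=
      ⟨_, hsym.hasEigenvalue_iSup_of_finiteDimensional⟩
    obtain ⟨v, hv⟩ := hμ.exists_hasEigenvector
    have hvU : (v : E) ∈ U := v.2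
    have hcv : c (v : E) = μ • (v : E) := by
      have := hv.apply_eq_smul
      calc c (v : E) = (cU v : E) := rfl
        _ = ((μ • v : U) : E) := by rw [this]
        _ = μ • (v : E) := rfl
    refine ⟨μ, ?_⟩
    have hKU : LinearMap.ker (c - μ • LinearMap.id) ⊓ U = U := by
      apply hmin _ inf_le_right
      · rw [Submodule.ne_bot_iff]
        refine ⟨(v : E), Submodule.mem_inf.mpr ⟨?_, hvU⟩, ?_⟩
        · rw [LinearMap.mem_ker, LinearMap.sub_apply, LinearMap.smul_apply, LinearMap.id_apply,
            hcv, sub_self]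
        · exact fun h => hv.2 (Subtype.coe_injective h)
      · intro b hb x hx
        rw [Submodule.mem_inf] at hx ⊢
        obtain ⟨hx1, hx2⟩ := hx
        refine ⟨?_, hUinv b hb x hx2⟩
        rw [LinearMap.mem_ker, LinearMap.sub_apply, LinearMap.smul_apply, LinearMap.id_apply,
          sub_eq_zero] at hx1
        rw [LinearMap.mem_ker, LinearMap.sub_apply, LinearMap.smul_apply, LinearMap.id_apply,
          sub_eq_zero, hcS b hb x, ← _root_.map_smul b μ x, hx1]
    intro x hx
    have hx' : x ∈ LinearMap.ker (c - μ • LinearMap.id) ⊓ U := hKU.symm ▸ hx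
    have hcxμ : c x = μ • x := by
      have := (Submodule.mem_inf.mp hx').1
      rw [LinearMap.mem_ker, LinearMap.sub_apply, LinearMap.smul_apply, LinearMap.id_apply,
        sub_eq_zero] at this
      exact this
    rw [hcx] at hcxμ
    have := congrArg a hcxμ
    rw [map_add, a.apply_symm_apply, _root_.map_smul] at this
    exact this
  -- if the quadratic has real roots, the element is scalar on U
  have hALT : ∀ a ∈ S, ∀ μ : ℝ, (∀ x ∈ U, a (a x) + x = μ • a x) → 4 ≤ μ ^ 2 →
      ∃ r : ℝ, ∀ x ∈ U, a x = r • x := by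
    intro a ha μ hq hge
    set d : ℝ := Real.sqrt (μ ^ 2 - 4) with hd
    have hd2 : d ^ 2 = μ ^ 2 - 4 := Real.sq_sqrt (by linarith)
    set r : ℝ := (μ + d) / 2 with hr
    set r' : ℝ := (μ - d) / 2 with hr'
    have hsum : r + r' = μ := by rw [hr, hr']; ring
    have hprod : r * r' = 1 := by
      rw [hr, hr']
      have : (μ + d) / 2 * ((μ - d) / 2) = (μ ^ 2 - d ^ 2) / 4 := by ring
      rw [this, hd2]; ring
    set A : E →ₗ[ℝ] E := (a.toLinearEquiv : E →ₗ[ℝ] E) with hA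
    have hAx : ∀ x : E, A x = a x := fun _ => rfl
    set f : E →ₗ[ℝ] E := A - r • LinearMap.id with hf
    set g : E →ₗ[ℝ] E := A - r' • LinearMap.id with hg
    have hfx : ∀ x : E, f x = a x - r • x := fun _ => rfl
    have hgx : ∀ x : E, g x = a x - r' • x := fun _ => rfl
    have hfU : ∀ x ∈ U, f x ∈ U := fun x hx => by
      rw [hfx]; exact U.sub_mem (hUinv a ha x hx) (U.smul_mem r hx)
    have hgU : ∀ x ∈ U, g x ∈ U := fun x hx => by
      rw [hgx]; exact U.sub_mem (hUinv a ha x hx) (U.smul_mem r' hx)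
    have hfS : ∀ b ∈ S, ∀ x : E, f (b x) = b (f x) := by
      intro b hb x
      rw [hfx, hfx, hcomm a ha b hb x, map_sub, _root_.map_smul]
    have hgS : ∀ b ∈ S, ∀ x : E, g (b x) = b (g x) := by
      intro b hb x
      rw [hgx, hgx, hcomm a ha b hb x, map_sub, _root_.map_smul]
    have hfg : ∀ x ∈ U, f (g x) = 0 := by
      intro x hx
      rw [hgx, hfx, map_sub, _root_.map_smul]
      have hqx := hq x hx
      have : a (a x) = μ • a x - x := by rw [← hqx]; abel
      rw [this, smul_sub, smul_smul, hprod]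
      rw [← hsum]
      module
    rcases hzd f g hfU hfS hgU hgS hfg with h | h
    · refine ⟨r, fun x hx => ?_⟩
      have := h x hx
      rw [hfx, sub_eq_zero] at this
      exact this
    · refine ⟨r', fun x hx => ?_⟩
      have := h x hx
      rw [hgx, sub_eq_zero] at this
      exact this
  by_cases hsc : ∀ a ∈ S, ∃ r : ℝ, ∀ x ∈ U, a x = r • x
  · -- all scalar: a line works
    obtain ⟨x₀, hx₀U, hx₀⟩ := Submodule.exists_mem_ne_zero_of_ne_bot hUne
    refine ⟨ℝ ∙ x₀, ?_, ?_, ?_, ?_⟩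
    · rw [Submodule.span_le, Set.singleton_subset_iff]
      exact hUW₀ hx₀U
    · rw [Ne, Submodule.span_singleton_eq_bot]
      exact hx₀
    · rw [finrank_span_singleton hx₀]; omega
    · intro a ha y hy
      obtain ⟨r, hr⟩ := hsc a ha
      rw [Submodule.mem_span_singleton] at hy ⊢
      obtain ⟨t, rfl⟩ := hy
      exact ⟨t * r, by rw [_root_.map_smul, hr x₀ hx₀U, smul_smul]⟩
  -- some non-scalar element: build a complex structure J on U
  push_neg at hsc
  obtain ⟨a₀, ha₀S, ha₀⟩ := hsc
  obtain ⟨μ₀, hμ₀⟩ := hquad a₀ ha₀S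
  have hdisc : μ₀ ^ 2 < 4 := by
    by_contra hge
    push_neg at hge
    obtain ⟨r, hr⟩ := hALT a₀ ha₀S μ₀ hμ₀ hge
    obtain ⟨x, hxU, hxne⟩ := ha₀ r
    exact hxne (hr x hxU)
  set ν : ℝ := Real.sqrt (4 - μ₀ ^ 2) with hν
  have hν2 : ν ^ 2 = 4 - μ₀ ^ 2 := Real.sq_sqrt (by linarith)
  have hνpos : 0 < ν := Real.sqrt_pos.mpr (by linarith)
  set A₀ : E →ₗ[ℝ] E := (a₀.toLinearEquiv : E →ₗ[ℝ] E) with hA₀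
  set J : E →ₗ[ℝ] E := ν⁻¹ • ((2 : ℝ) • A₀ - μ₀ • LinearMap.id) with hJ
  have hJx : ∀ x : E, J x = ν⁻¹ • ((2 : ℝ) • a₀ x - μ₀ • x) := fun _ => rfl
  have hJU : ∀ x ∈ U, J x ∈ U := by
    intro x hx
    rw [hJx]
    exact U.smul_mem _ (U.sub_mem (U.smul_mem _ (hUinv a₀ ha₀S x hx)) (U.smul_mem _ hx))
  have hJS : ∀ b ∈ S, ∀ x : E, J (b x) = b (J x) := by
    intro b hb x
    rw [hJx, hJx, hcomm a₀ ha₀S b hb x, _root_.map_smul, map_sub, _root_.map_smul, _root_.map_smul]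
  have ha₀a₀ : ∀ x ∈ U, a₀ (a₀ x) = μ₀ • a₀ x - x := by
    intro x hx
    rw [← hμ₀ x hx]; abel
  have hJJ : ∀ x ∈ U, J (J x) = -x := by
    intro x hx
    have hν0 : ν ≠ 0 := ne_of_gt hνpos
    have e1 : J (J x) = ν⁻¹ • ((2 : ℝ) • a₀ (J x) - μ₀ • J x) := hJx _
    have e2 : a₀ (J x) = ν⁻¹ • ((2 : ℝ) • (μ₀ • a₀ x - x) - μ₀ • a₀ x) := by
      rw [hJx x, _root_.map_smul, map_sub, _root_.map_smul, _root_.map_smul, ha₀a₀ x hx]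
    rw [e1, e2, hJx x]
    match_scalars
    · field_simp
      ring
    · field_simp
      linear_combination hν2
  -- every element of S acts on U as α + β J
  have hrep : ∀ b ∈ S, ∃ α β : ℝ, ∀ x ∈ U, b x = α • x + β • J x := by
    intro b hb
    obtain ⟨μ, hμ⟩ := hquad b hb
    by_cases hd : 4 ≤ μ ^ 2
    · obtain ⟨r, hr⟩ := hALT b hb μ hμ hd
      exact ⟨r, 0, fun x hx => by rw [hr x hx, zero_smul, add_zero]⟩
    push_neg at hd
    set β₁ : ℝ := Real.sqrt (4 - μ ^ 2) / 2 with hβ₁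
    have hβ₁2 : β₁ ^ 2 = (4 - μ ^ 2) / 4 := by
      rw [hβ₁, div_pow, Real.sq_sqrt (by linarith)]
      norm_num
    set α₁ : ℝ := μ / 2 with hα₁
    have hαβ : α₁ ^ 2 + β₁ ^ 2 = 1 := by rw [hα₁, hβ₁2]; ring
    set B : E →ₗ[ℝ] E := (b.toLinearEquiv : E →ₗ[ℝ] E) with hB
    set T : E →ₗ[ℝ] E := B - α₁ • LinearMap.id - β₁ • J with hT
    set T' : E →ₗ[ℝ] E := B - α₁ • LinearMap.id + β₁ • J with hT'
    have hTx : ∀ x : E, T x = b x - α₁ • x - β₁ • J x := fun _ => rfl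
    have hT'x : ∀ x : E, T' x = b x - α₁ • x + β₁ • J x := fun _ => rfl
    have hTU : ∀ x ∈ U, T x ∈ U := by
      intro x hx
      rw [hTx]
      exact U.sub_mem (U.sub_mem (hUinv b hb x hx) (U.smul_mem _ hx)) (U.smul_mem _ (hJU x hx))
    have hT'U : ∀ x ∈ U, T' x ∈ U := by
      intro x hx
      rw [hT'x]
      exact U.add_mem (U.sub_mem (hUinv b hb x hx) (U.smul_mem _ hx)) (U.smul_mem _ (hJU x hx))
    have hTS : ∀ b' ∈ S, ∀ x : E, T (b' x) = b' (T x) := by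
      intro b' hb' x
      rw [hTx, hTx, hcomm b hb b' hb' x, hJS b' hb' x, map_sub, map_sub, _root_.map_smul, _root_.map_smul]
    have hT'S : ∀ b' ∈ S, ∀ x : E, T' (b' x) = b' (T' x) := by
      intro b' hb' x
      rw [hT'x, hT'x, hcomm b hb b' hb' x, hJS b' hb' x, map_add, map_sub, _root_.map_smul, _root_.map_smul]
    have hbb : ∀ x ∈ U, b (b x) = μ • b x - x := by
      intro x hx
      rw [← hμ x hx]; abel
    have hbJ : ∀ x : E, b (J x) = J (b x) := fun x => (hJS b hb x).symm
    have hTT' : ∀ x ∈ U, T (T' x) = 0 := by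
      intro x hx
      have e1 : T (T' x) = b (T' x) - α₁ • (T' x) - β₁ • J (T' x) := hTx _
      have e2 : b (T' x) = b (b x) - α₁ • b x + β₁ • b (J x) := by
        rw [hT'x, map_add, map_sub, _root_.map_smul, _root_.map_smul]
      have e3 : J (T' x) = J (b x) - α₁ • J x + β₁ • J (J x) := by
        rw [hT'x, map_add, map_sub, _root_.map_smul, _root_.map_smul]
      rw [e1, e2, e3, hT'x, hJJ x hx, hbb x hx, hbJ x]
      generalize b x = y₁
      generalize J y₁ = y₂
      generalize J x = y₃
      match_scalars <;> (try ring1) <;> linear_combination hαβ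
    rcases hzd T T' hTU hTS hT'U hT'S hTT' with h | h
    · refine ⟨α₁, β₁, fun x hx => ?_⟩
      have := h x hx
      rw [hTx, sub_eq_zero] at this
      rw [sub_eq_iff_eq_add] at this
      rw [this]; abel
    · refine ⟨α₁, -β₁, fun x hx => ?_⟩
      have := h x hx
      rw [hT'x] at this
      have : b x = α₁ • x - β₁ • J x := by
        rw [← sub_eq_zero]
        rw [← this]; abel
      rw [this, neg_smul]; abel
  -- conclude with the plane spanned by x₀ and J x₀
  obtain ⟨x₀, hx₀U, hx₀⟩ := Submodule.exists_mem_ne_zero_of_ne_bot hUne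
  have hJx₀U : J x₀ ∈ U := hJU x₀ hx₀U
  refine ⟨Submodule.span ℝ {x₀, J x₀}, ?_, ?_, ?_, ?_⟩
  · rw [Submodule.span_le]
    intro y hy
    rcases hy with h | h
    · rw [h]; exact hUW₀ hx₀U
    · rw [Set.mem_singleton_iff] at h
      rw [h]; exact hUW₀ hJx₀U
  · rw [Submodule.ne_bot_iff]
    exact ⟨x₀, Submodule.subset_span (Set.mem_insert _ _), hx₀⟩
  · calc finrank ℝ (Submodule.span ℝ ({x₀, J x₀} : Set E))
        = finrank ℝ ((ℝ ∙ x₀) ⊔ (ℝ ∙ J x₀) : Submodule ℝ E) := by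
          rw [Submodule.span_insert]
      _ ≤ finrank ℝ (ℝ ∙ x₀) + finrank ℝ (ℝ ∙ J x₀) := by
          have := Submodule.finrank_sup_add_finrank_inf_eq (ℝ ∙ x₀) (ℝ ∙ J x₀)
          omega
      _ ≤ 2 := by
          have h1 := finrank_span_singleton_le' x₀
          have h2 := finrank_span_singleton_le' (J x₀)
          omega
  · intro b hb y hy
    obtain ⟨α, β, hαβ⟩ := hrep b hb
    rw [Submodule.mem_span_pair] at hy ⊢
    obtain ⟨t, u, rfl⟩ := hy
    have hyU : t • x₀ + u • J x₀ ∈ U := U.add_mem (U.smul_mem _ hx₀U) (U.smul_mem _ hJx₀U)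
    refine ⟨α * t - β * u, α * u + β * t, ?_⟩
    rw [hαβ _ hyU, map_add, _root_.map_smul, _root_.map_smul, hJJ x₀ hx₀U]
    module

end InvariantSubspace

/-- (Eriksson-Bique's length estimate.) Let `(G, V)` be a cocompact
translation pair of a discrete `Γ ≤ E(n)` with `G` abelian, `V` linear and
`k = dim V < n − 2`. Then there are unit vectors `u₁, u₂ ∈ V^⊥` such that every finite-length
path `σ` from `L₁ = [0,∞)u₁` to `⋃_{γ∈G} γ([0,∞)u₂)` with `s = inf_t d(σ(t), V) > 0`
has length at least `√2 · s`. -/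
theorem length_estimate_orthogonal {n : ℕ} (Γ G : Subgroup (Isom n))
    (V : AffineSubspace ℝ (En n)) (hΓ : IsDiscreteSubgroup Γ)
    (hpair : IsCocompactTranslationPair Γ G V)
    (habel : ∀ g ∈ G, ∀ g' ∈ G, g * g' = g' * g)
    (h0V : (0 : En n) ∈ V) (k : ℕ) (hk : k = Module.finrank ℝ V.direction)
    (hkn : k + 2 < n) :
    ∃ u₁ u₂ : En n, ‖u₁‖ = 1 ∧ ‖u₂‖ = 1 ∧ u₁ ∈ V.directionᗮ ∧ u₂ ∈ V.directionᗮ ∧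
      ∀ σ : ℝ → En n, Continuous σ →
        eVariationOn σ (Set.Icc 0 1) ≠ ⊤ →
        (∃ c : ℝ, 0 ≤ c ∧ σ 0 = c • u₁) →
        (∃ γ ∈ G, ∃ c : ℝ, 0 ≤ c ∧ σ 1 = γ (c • u₂)) →
        ∀ s : ℝ,
          s = sInf ((fun t => Metric.infDist (σ t) (V : Set (En n))) '' Set.Icc 0 1) →
          0 < s →
          ENNReal.ofReal (Real.sqrt 2 * s) ≤ eVariationOn σ (Set.Icc 0 1) := by
  classical
  -- since `0 ∈ V`, the affine subspace `V` coincides with its direction as a set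
  have hdir_set : ∀ x : En n, x ∈ V ↔ x ∈ V.direction := by
    intro x
    constructor
    · intro hx
      have := AffineSubspace.vsub_mem_direction hx h0V
      simpa using this
    · intro hx
      have := AffineSubspace.vadd_mem_of_mem_direction hx h0V
      simpa using this
  -- the linear (orthogonal) parts given by Mazur–Ulam
  set A : Isom n → (En n ≃ₗᵢ[ℝ] En n) := fun γ => γ.toRealLinearIsometryEquiv with hA
  have hAx : ∀ γ : Isom n, ∀ x : En n, A γ x = γ x - γ 0 := fun γ x =>
    γ.toRealLinearIsometryEquiv_apply x
  have hAcomp : ∀ γ δ : Isom n, ∀ x : En n, A γ (A δ x) = A (γ * δ) x := by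
    intro γ δ x
    have h1 : A γ (A δ x) = A γ (δ x) - A γ (δ 0) := by
      rw [hAx δ x, map_sub]
    have h2 : (γ * δ) x = γ (δ x) := rfl
    have h3 : (γ * δ) 0 = γ (δ 0) := rfl
    rw [h1, hAx, hAx, hAx (γ * δ), h2, h3]
    abel
  set S : Set (En n ≃ₗᵢ[ℝ] En n) := {f | ∃ δ ∈ G, f = A δ} with hS
  have hScomm : ∀ a ∈ S, ∀ b ∈ S, ∀ x : En n, a (b x) = b (a x) := by
    rintro _ ⟨γ, hγ, rfl⟩ _ ⟨δ, hδ, rfl⟩ x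
    rw [hAcomp, hAcomp, habel γ hγ δ hδ]
  -- each `A γ` fixes the direction of `V` pointwise
  have hfix : ∀ γ ∈ G, ∀ d ∈ V.direction, A γ d = d := by
    intro γ hγ d hd
    obtain ⟨v, hv⟩ := hpair.translation γ hγ
    have hdV : d ∈ V := (hdir_set d).mpr hd
    rw [hAx, hv d hdV, hv 0 h0V]
    abel
  -- hence each `A γ` preserves the orthogonal complement
  set W₀ : Submodule ℝ (En n) := V.directionᗮ with hW₀def
  have horthW : ∀ γ ∈ G, ∀ u ∈ W₀, A γ u ∈ W₀ := by
    intro γ hγ u hu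
    rw [Submodule.mem_orthogonal]
    intro d hd
    have h1 : (A γ) d = d := hfix γ hγ d hd
    have h2 := (A γ).inner_map_map d u
    rw [h1] at h2
    rw [h2]
    exact (Submodule.mem_orthogonal _ u).mp hu d hd
  have hSW₀ : ∀ a ∈ S, ∀ x ∈ W₀, a x ∈ W₀ := by
    rintro _ ⟨γ, hγ, rfl⟩ x hx
    exact horthW γ hγ x hx
  -- dimension counting
  have hfinE : Module.finrank ℝ (En n) = n := finrank_euclideanSpace_fin
  have hWrank := Submodule.finrank_add_finrank_orthogonal (K := V.direction)
  rw [hfinE, ← hk] at hWrank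
  have hW₀ne : W₀ ≠ ⊥ := by
    intro h
    rw [hW₀def] at h
    rw [h, finrank_bot] at hWrank
    omega
  obtain ⟨U, hUW₀, hUne, hUrank, hUinv⟩ :=
    exists_small_invariant_subspace S hScomm W₀ hW₀ne hSW₀
  -- choose u₂ in U
  obtain ⟨y₂, hy₂U, hy₂ne⟩ := Submodule.exists_mem_ne_zero_of_ne_bot hUne
  obtain ⟨u₂, hu₂U, hu₂norm⟩ : ∃ u, u ∈ U ∧ ‖u‖ = 1 :=
    ⟨‖y₂‖⁻¹ • y₂, U.smul_mem _ hy₂U, norm_smul_inv_norm hy₂ne⟩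
  have hu₂W₀ : u₂ ∈ W₀ := hUW₀ hu₂U
  -- choose u₁ orthogonal to both V.direction and U
  set Z : Submodule ℝ (En n) := (V.direction ⊔ U)ᗮ with hZdef
  have hZne : Z ≠ ⊥ := by
    intro h
    have hsup := Submodule.finrank_sup_add_finrank_inf_eq V.direction U
    have hZr := Submodule.finrank_add_finrank_orthogonal (K := V.direction ⊔ U)
    rw [hfinE] at hZr
    rw [hZdef] at h
    rw [h, finrank_bot] at hZr
    omega
  obtain ⟨y₁, hy₁Z, hy₁ne⟩ := Submodule.exists_mem_ne_zero_of_ne_bot hZne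
  obtain ⟨u₁, hu₁Z, hu₁norm⟩ : ∃ u, u ∈ Z ∧ ‖u‖ = 1 :=
    ⟨‖y₁‖⁻¹ • y₁, Z.smul_mem _ hy₁Z, norm_smul_inv_norm hy₁ne⟩
  have hu₁W₀ : u₁ ∈ V.directionᗮ := Submodule.orthogonal_le le_sup_left hu₁Z
  refine ⟨u₁, u₂, hu₁norm, hu₂norm, hu₁W₀, hu₂W₀, ?_⟩
  intro σ hσcont hσvar h0 h1 s hs hspos
  obtain ⟨c, hc0, hσ0⟩ := h0
  obtain ⟨γ, hγG, c', hc'0, hσ1⟩ := h1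
  -- s is a lower bound for the distance to V along the path
  have hbdd : BddBelow ((fun t => Metric.infDist (σ t) (V : Set (En n))) '' Set.Icc 0 1) := by
    refine ⟨0, ?_⟩
    rintro r ⟨t, ht, rfl⟩
    exact Metric.infDist_nonneg
  have hsle : ∀ t ∈ Set.Icc (0:ℝ) 1, s ≤ Metric.infDist (σ t) (V : Set (En n)) := by
    intro t ht
    rw [hs]
    exact csInf_le hbdd ⟨t, ht, rfl⟩
  have h0mem : (0:ℝ) ∈ Set.Icc (0:ℝ) 1 := ⟨le_refl 0, zero_le_one⟩
  have h1mem : (1:ℝ) ∈ Set.Icc (0:ℝ) 1 := ⟨zero_le_one, le_refl 1⟩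
  -- s ≤ c and s ≤ c'
  have hsc : s ≤ c := by
    have h1' := hsle 0 h0mem
    have h2' : Metric.infDist (σ 0) (V : Set (En n)) ≤ dist (σ 0) 0 :=
      Metric.infDist_le_dist_of_mem h0V
    rw [hσ0, dist_zero_right, norm_smul, Real.norm_eq_abs, abs_of_nonneg hc0, hu₁norm,
      mul_one] at h2'
    rw [hσ0] at h1'
    linarith
  have hγ0V : γ 0 ∈ V := hpair.invariant γ hγG 0 h0V
  have hsc' : s ≤ c' := by
    have h1' := hsle 1 h1mem
    have h2' : Metric.infDist (σ 1) (V : Set (En n)) ≤ dist (σ 1) (γ 0) :=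
      Metric.infDist_le_dist_of_mem hγ0V
    rw [hσ1, γ.dist_eq, dist_zero_right, norm_smul, Real.norm_eq_abs, abs_of_nonneg hc'0,
      hu₂norm, mul_one] at h2'
    rw [hσ1] at h1'
    linarith
  -- decompose σ 1
  obtain ⟨w, hwdef⟩ : ∃ x : En n, x = A γ u₂ := ⟨_, rfl⟩
  have hwU : w ∈ U := hwdef ▸ hUinv (A γ) ⟨γ, hγG, rfl⟩ u₂ hu₂U
  have hwW₀ : w ∈ V.directionᗮ := hwdef ▸ horthW γ hγG u₂ hu₂W₀
  have hwnorm : ‖w‖ = 1 := by rw [hwdef, (A γ).norm_map, hu₂norm]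
  obtain ⟨v, hvdef⟩ : ∃ x : En n, x = γ 0 := ⟨_, rfl⟩
  have hvV : v ∈ V := by rw [hvdef]; exact hγ0V
  have hvdir : v ∈ V.direction := (hdir_set v).mp hvV
  have hσ1' : σ 1 = c' • w + v := by
    have h1' : A γ (c' • u₂) = γ (c' • u₂) - γ 0 := hAx γ _
    have h2' : A γ (c' • u₂) = c' • w := by rw [hwdef]; exact (A γ).map_smul c' u₂
    rw [h2'] at h1'
    rw [hσ1, hvdef]
    exact eq_add_of_sub_eq h1'.symm
  -- inner product computations
  have hu₁w : inner ℝ u₁ w = 0 := by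
    have := (Submodule.mem_orthogonal _ u₁).mp hu₁Z w (Submodule.mem_sup_right hwU)
    rwa [real_inner_comm] at this
  have hu₁v : inner ℝ u₁ v = 0 := by
    have := (Submodule.mem_orthogonal _ u₁).mp hu₁Z v (Submodule.mem_sup_left hvdir)
    rwa [real_inner_comm] at this
  have hwv : inner ℝ w v = 0 := by
    have := (Submodule.mem_orthogonal _ w).mp hwW₀ v hvdir
    rwa [real_inner_comm] at this
  -- the distance estimate
  have hkey : Real.sqrt 2 * s ≤ dist (σ 0) (σ 1) := by
    have hd : dist (σ 0) (σ 1) = ‖(c • u₁ - c' • w) - v‖ := by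
      rw [dist_eq_norm, hσ0, hσ1']
      congr 1
      abel
    have hq_inner : inner ℝ (c • u₁ - c' • w) v = 0 := by
      rw [inner_sub_left, real_inner_smul_left, real_inner_smul_left, hu₁v, hwv]
      ring
    have hq_norm : ‖c • u₁ - c' • w‖ ^ 2 = c ^ 2 + c' ^ 2 := by
      rw [norm_sub_sq_real, real_inner_smul_left, real_inner_smul_right, hu₁w,
        norm_smul, norm_smul, Real.norm_eq_abs, Real.norm_eq_abs, abs_of_nonneg hc0,
        abs_of_nonneg hc'0, hu₁norm, hwnorm]
      ring
    have hd2 : dist (σ 0) (σ 1) ^ 2 = c ^ 2 + c' ^ 2 + ‖v‖ ^ 2 := by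
      rw [hd, norm_sub_sq_real, hq_inner, hq_norm]
      ring
    have hsq : (Real.sqrt 2 * s) ^ 2 ≤ dist (σ 0) (σ 1) ^ 2 := by
      rw [hd2, mul_pow, Real.sq_sqrt (by norm_num : (2:ℝ) ≥ 0)]
      have h1' : s ^ 2 ≤ c ^ 2 := pow_le_pow_left₀ hspos.le hsc 2
      have h2' : s ^ 2 ≤ c' ^ 2 := pow_le_pow_left₀ hspos.le hsc' 2
      have h3' : (0:ℝ) ≤ ‖v‖ ^ 2 := sq_nonneg _
      linarith
    have hnn : 0 ≤ Real.sqrt 2 * s := mul_nonneg (Real.sqrt_nonneg 2) (le_of_lt hspos)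
    have := Real.sqrt_le_sqrt hsq
    rwa [Real.sqrt_sq hnn, Real.sqrt_sq dist_nonneg] at this
  calc ENNReal.ofReal (Real.sqrt 2 * s) ≤ ENNReal.ofReal (dist (σ 0) (σ 1)) :=
        ENNReal.ofReal_le_ofReal hkey
    _ = edist (σ 0) (σ 1) := (edist_dist _ _).symm
    _ ≤ eVariationOn σ (Set.Icc 0 1) := eVariationOn.edist_le σ h0mem h1mem
end
end

section
/- (Phragmén–Brouwer property of ℝⁿ.) Let n ≥ 2, let A and B be disjoint closed subsets of ℝⁿ, and let x, y ∈ ℝⁿ \ (A ∪ B). If x and y lie in different connected components of ℝⁿ \ (A ∪ B), then x and y lie in different connected components of ℝⁿ \ A, or x and y lie in different connected components of ℝⁿ \ B. -/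
open Metric Filter MeasureTheory Asymptotics

noncomputable section

open Complex Set

/-- A continuous integer-valued function on a preconnected set is constant. -/
lemma intValued_apply_eq {X : Type*} [TopologicalSpace X] {s : Set X} (hs : IsPreconnected s)
    {ψ : X → ℝ} (hψ : ContinuousOn ψ s) (hint : ∀ z ∈ s, ∃ k : ℤ, ψ z = k)
    {z₀ z₁ : X} (h₀ : z₀ ∈ s) (h₁ : z₁ ∈ s) : ψ z₁ = ψ z₀ := by
  have himg : IsPreconnected (ψ '' s) := hs.image ψ hψ
  have key : ∀ a b : X, a ∈ s → b ∈ s → ψ a < ψ b → False := by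
    intro a b ha hb hab
    obtain ⟨ka, hka⟩ := hint a ha
    have hmid : (ka : ℝ) + 1/2 ∈ Set.Icc (ψ a) (ψ b) := by
      constructor
      · rw [hka]; linarith
      · obtain ⟨kb, hkb⟩ := hint b hb
        have : ka < kb := by
          have : (ka : ℝ) < kb := by rw [← hka, ← hkb]; exact hab
          exact_mod_cast this
        rw [hkb]
        have : ka + 1 ≤ kb := this
        have : ((ka : ℝ)) + 1 ≤ kb := by exact_mod_cast this
        linarith
    obtain ⟨c, hc, hceq⟩ := himg.Icc_subset ⟨a, ha, rfl⟩ ⟨b, hb, rfl⟩ hmid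
    obtain ⟨kc, hkc⟩ := hint c hc
    have h2 : (2 * (kc:ℝ)) = 2 * ka + 1 := by rw [hkc] at hceq; rw [hceq]; ring
    have h3 : (2 * kc : ℤ) = 2 * ka + 1 := by exact_mod_cast h2
    omega
  rcases lt_trichotomy (ψ z₁) (ψ z₀) with h | h | h
  · exact (key _ _ h₁ h₀ h).elim
  · exact h
  · exact (key _ _ h₀ h₁ h).elim

/-- Uniqueness of continuous logarithms on preconnected sets. -/
lemma contLog_unique {X : Type*} [TopologicalSpace X] {s : Set X} (hs : IsPreconnected s)
    {g₁ g₂ : X → ℂ} (h₁ : ContinuousOn g₁ s) (h₂ : ContinuousOn g₂ s)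
    (hexp : ∀ z ∈ s, Complex.exp (g₁ z) = Complex.exp (g₂ z))
    {z₀ : X} (hz₀ : z₀ ∈ s) (hval : g₁ z₀ = g₂ z₀) : ∀ z ∈ s, g₁ z = g₂ z := by
  have hπ : (0:ℝ) < 2 * Real.pi := by positivity
  set ψ : X → ℝ := fun z => (g₁ z - g₂ z).im / (2 * Real.pi) with hψdef
  have hψc : ContinuousOn ψ s :=
    (Complex.continuous_im.comp_continuousOn (h₁.sub h₂)).div_const _
  have hint : ∀ z ∈ s, ∃ k : ℤ, ψ z = k := by
    intro z hz
    obtain ⟨n, hn⟩ := Complex.exp_eq_exp_iff_exists_int.mp (hexp z hz)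
    refine ⟨n, ?_⟩
    have hsub : (g₁ z - g₂ z) = n * (2 * Real.pi * I) := by
      rw [hn]; push_cast; ring
    show (g₁ z - g₂ z).im / (2 * Real.pi) = n
    rw [hsub]
    have : ((n:ℂ) * (2 * Real.pi * I)).im = n * (2*Real.pi) := by
      simp [Complex.mul_im, Complex.mul_re]
    rw [this]
    field_simp
  intro z hz
  have h := intValued_apply_eq hs hψc hint hz₀ hz
  have hz0 : ψ z₀ = 0 := by simp [hψdef, hval]
  rw [hz0] at h
  have him : (g₁ z - g₂ z).im = 0 := by
    have h' : (g₁ z - g₂ z).im / (2 * Real.pi) = 0 := h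
    field_simp at h'
    simpa using h'
  obtain ⟨n, hn⟩ := Complex.exp_eq_exp_iff_exists_int.mp (hexp z hz)
  have hsub : (g₁ z - g₂ z) = n * (2 * Real.pi * I) := by
    rw [hn]; push_cast; ring
  have h2 : (n:ℝ) * (2 * Real.pi) = 0 := by
    have := congrArg Complex.im hsub
    rw [him] at this
    simpa [Complex.mul_im, Complex.mul_re] using this.symm
  have hn0 : (n:ℝ) = 0 := by
    rcases mul_eq_zero.mp h2 with h' | h'
    · exact h'
    · exfalso; have := Real.pi_pos; linarith
  have : g₁ z - g₂ z = 0 := by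
    rw [hsub]
    norm_cast at hn0 ⊢
    simp [hn0]
  exact sub_eq_zero.mp this

set_option maxHeartbeats 2000000 in
/-- A continuous nonvanishing function on a normed space has a continuous logarithm
on every closed ball (normalized at the origin). -/
lemma exists_contLog_on_ball {E : Type*} [NormedAddCommGroup E] [NormedSpace ℝ E] [ProperSpace E]
    {f : E → ℂ} (hf : Continuous f) (h0 : ∀ z, f z ≠ 0) (R : ℝ) :
    ∃ g : E → ℂ, ContinuousOn g (Metric.closedBall 0 R) ∧
      (∀ z ∈ Metric.closedBall 0 R, Complex.exp (g z) = f z) ∧ g 0 = Complex.log (f 0) := by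
  rcases lt_or_ge R 0 with hR | hR
  · refine ⟨fun _ => Complex.log (f 0), continuousOn_const, ?_, rfl⟩
    intro z hz
    simp [Metric.closedBall_eq_empty.mpr hR] at hz
  -- compact set of parameters
  set C : Set (ℝ × E) := Set.Icc (0:ℝ) 1 ×ˢ Metric.closedBall 0 R with hCdef
  have hC : IsCompact C := isCompact_Icc.prod (isCompact_closedBall _ _)
  have hCne : C.Nonempty := ⟨(0, 0), by
    constructor
    · exact ⟨le_refl _, zero_le_one⟩
    · simpa using hR⟩
  have hφ : Continuous fun p : ℝ × E => f (p.1 • p.2) :=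
    hf.comp ((continuous_fst).smul continuous_snd)
  -- positive minimum of ‖f (t • z)‖ on C
  obtain ⟨p₀, hp₀C, hp₀min⟩ := hC.exists_isMinOn hCne (hφ.norm.continuousOn)
  set m : ℝ := ‖f (p₀.1 • p₀.2)‖ with hmdef
  have hm : 0 < m := norm_pos_iff.mpr (h0 _)
  have hmle : ∀ p ∈ C, m ≤ ‖f (p.1 • p.2)‖ := fun p hp => hp₀min hp
  -- uniform continuity
  obtain ⟨δ, hδ, hUC⟩ := Metric.uniformContinuousOn_iff.mp
    (hC.uniformContinuousOn_of_continuous hφ.continuousOn) m hm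
  obtain ⟨N', hN'⟩ := exists_nat_one_div_lt hδ
  set N : ℕ := N' + 1 with hNdef
  have hN : (1:ℝ)/N < δ := by rw [hNdef]; push_cast; exact hN'
  have hNpos : 0 < (N:ℝ) := by positivity
  -- ratio functions
  set q : ℕ → E → ℂ := fun i z => f (((i+1:ℕ)/N : ℝ) • z) / f (((i:ℕ)/N : ℝ) • z) with hqdef
  have hmemC : ∀ (i : ℕ), i ≤ N → ∀ z ∈ Metric.closedBall (0:E) R,
      (((i:ℕ)/N : ℝ), z) ∈ C := by
    intro i hi z hz
    refine ⟨⟨by positivity, ?_⟩, hz⟩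
    rw [div_le_one hNpos]
    exact_mod_cast hi
  have hqnear : ∀ (i : ℕ), i < N → ∀ z ∈ Metric.closedBall (0:E) R, ‖q i z - 1‖ < 1 := by
    intro i hi z hz
    have h1 : (((i+1:ℕ)/N : ℝ), z) ∈ C := hmemC (i+1) hi z hz
    have h2 : (((i:ℕ)/N : ℝ), z) ∈ C := hmemC i (le_of_lt hi) z hz
    have hdist : dist ((((i+1:ℕ)/N : ℝ), z) : ℝ × E) ((((i:ℕ)/N : ℝ), z)) < δ := by
      rw [Prod.dist_eq]
      simp only [dist_self]
      rw [max_eq_left dist_nonneg]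
      rw [Real.dist_eq]
      have : ((i+1:ℕ):ℝ)/N - ((i:ℕ):ℝ)/N = 1/N := by push_cast; field_simp; ring
      rw [this]
      rwa [abs_of_pos (by positivity)]
    have hkey := hUC _ h1 _ h2 hdist
    rw [dist_eq_norm] at hkey
    have hden : f (((i:ℕ)/N : ℝ) • z) ≠ 0 := h0 _
    have : q i z - 1 = (f (((i+1:ℕ)/N : ℝ) • z) - f (((i:ℕ)/N : ℝ) • z)) /
        f (((i:ℕ)/N : ℝ) • z) := by
      simp only [hqdef]
      exact div_sub_one hden
    rw [this, norm_div, div_lt_one (norm_pos_iff.mpr hden)]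
    exact lt_of_lt_of_le hkey (hmle _ h2)
  have hqslit : ∀ (i : ℕ), i < N → ∀ z ∈ Metric.closedBall (0:E) R, q i z ∈ Complex.slitPlane := by
    intro i hi z hz
    have := Complex.mem_slitPlane_of_norm_lt_one (hqnear i hi z hz)
    simpa using this
  -- the candidate logarithm
  set G : E → ℂ := fun z => Complex.log (f 0) +
    ∑ i ∈ Finset.range N, Complex.log (q i z) with hGdef
  have hGcont : ContinuousOn G (Metric.closedBall 0 R) := by
    apply ContinuousOn.add continuousOn_const
    apply continuousOn_finset_sum
    intro i hi
    have hi' : i < N := Finset.mem_range.mp hi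
    apply ContinuousOn.clog
    · apply ContinuousOn.div
      · exact (hf.comp (continuous_const_smul _)).continuousOn
      · exact (hf.comp (continuous_const_smul _)).continuousOn
      · intro z hz; exact h0 _
    · intro z hz; exact hqslit i hi' z hz
  have hGexp : ∀ z ∈ Metric.closedBall (0:E) R, ∀ j ≤ N,
      Complex.exp (Complex.log (f 0) + ∑ i ∈ Finset.range j, Complex.log (q i z))
        = f (((j:ℕ)/N : ℝ) • z) := by
    intro z hz j hj
    induction j with
    | zero => simp [Complex.exp_log (h0 0)]
    | succ j ih =>
      have hj' : j ≤ N := le_of_lt (Nat.lt_of_succ_le hj)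
      have hjlt : j < N := Nat.lt_of_succ_le hj
      rw [Finset.sum_range_succ, ← add_assoc, Complex.exp_add, ih hj']
      rw [Complex.exp_log (Complex.slitPlane_ne_zero (hqslit j hjlt z hz))]
      simp only [hqdef]
      rw [mul_div_assoc']
      rw [mul_comm]
      rw [mul_div_assoc]
      rw [div_self (h0 _), mul_one]
  refine ⟨G, hGcont, ?_, ?_⟩
  · intro z hz
    have := hGexp z hz N le_rfl
    rwa [div_self (ne_of_gt hNpos), one_smul] at this
  · have : ∀ i ∈ Finset.range N, Complex.log (q i 0) = 0 := by
      intro i _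
      simp only [hqdef]
      simp [smul_zero, div_self (h0 0), Complex.log_one]
    rw [hGdef]
    simp only [Finset.sum_congr rfl this, Finset.sum_const_zero, add_zero]

/-- A continuous nonvanishing complex-valued function on a proper real normed space
has a continuous logarithm. -/
lemma exists_contLog {E : Type*} [NormedAddCommGroup E] [NormedSpace ℝ E] [ProperSpace E]
    {f : E → ℂ} (hf : Continuous f) (h0 : ∀ z, f z ≠ 0) :
    ∃ g : E → ℂ, Continuous g ∧ ∀ z, Complex.exp (g z) = f z := by
  choose G hGc hGe hG0 using fun R : ℕ => exists_contLog_on_ball hf h0 (R : ℝ)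
  have agree : ∀ K R : ℕ, K ≤ R → ∀ z ∈ Metric.closedBall (0:E) K, G K z = G R z := by
    intro K R hKR
    have hsub : Metric.closedBall (0:E) K ⊆ Metric.closedBall 0 R :=
      Metric.closedBall_subset_closedBall (by exact_mod_cast hKR)
    have hpre : IsPreconnected (Metric.closedBall (0:E) K) :=
      (convex_closedBall _ _).isPreconnected
    exact contLog_unique hpre (hGc K) ((hGc R).mono hsub)
      (fun z hz => by rw [hGe K z hz, hGe R z (hsub hz)])
      (Metric.mem_closedBall_self (by positivity)) (by rw [hG0, hG0])
  have agree' : ∀ K R : ℕ, ∀ z : E, ‖z‖ ≤ K → ‖z‖ ≤ R → G K z = G R z := by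
    intro K R z h1 h2
    rcases le_total K R with h | h
    · exact agree K R h z (mem_closedBall_zero_iff.mpr h1)
    · exact (agree R K h z (mem_closedBall_zero_iff.mpr h2)).symm
  have hzle : ∀ z : E, ‖z‖ ≤ ((⌊‖z‖⌋₊ + 1 : ℕ) : ℝ) := by
    intro z
    have := Nat.lt_floor_add_one ‖z‖
    push_cast
    linarith
  refine ⟨fun z => G (⌊‖z‖⌋₊ + 1) z, ?_, ?_⟩
  · rw [continuous_iff_continuousAt]
    intro z₀
    set R₀ : ℕ := ⌊‖z₀‖⌋₊ + 1 with hR₀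
    have hz₀ : z₀ ∈ Metric.ball (0:E) R₀ := by
      rw [mem_ball_zero_iff]
      have := Nat.lt_floor_add_one ‖z₀‖
      rw [hR₀]
      push_cast
      linarith
    have heq : ∀ z ∈ Metric.ball (0:E) R₀, G (⌊‖z‖⌋₊ + 1) z = G R₀ z := by
      intro z hz
      rw [mem_ball_zero_iff] at hz
      exact agree' _ _ z (hzle z) (le_of_lt hz)
    have hc : ContinuousAt (G R₀) z₀ :=
      (hGc R₀).continuousAt
        (Filter.mem_of_superset (Metric.isOpen_ball.mem_nhds hz₀) Metric.ball_subset_closedBall)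
    exact hc.congr (Filter.eventually_of_mem (Metric.isOpen_ball.mem_nhds hz₀)
      (fun z hz => (heq z hz).symm))
  · intro z
    exact hGe _ z (mem_closedBall_zero_iff.mpr (hzle z))

/-- Crossing lemma: along a path from `x ∈ W` to `y ∉ W` avoiding the zero set of `u`,
the "lifted phase" `h` ends at the value `m + 1`. -/
lemma cross_lemma {X : Type*} [TopologicalSpace X] {u h : X → ℝ} (hu : Continuous u)
    (hh : Continuous h) {W : Set X} {m : ℤ}
    (hW : ∀ z ∈ W, h z = u z + m ∧ 0 < u z ∧ u z < 1)
    (hout : ∀ z ∉ W, ∃ k : ℤ, h z = k)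
    {x y : X} (hxW : x ∈ W) (hyW : y ∉ W)
    (α : Path x y) (hα : ∀ t, u (α t) ≠ 0) :
    h y = m + 1 := by
  set φ : unitInterval → ℝ := fun t => h (α t) with hφ
  have hφc : Continuous φ := hh.comp α.continuous
  have huc : Continuous fun t : unitInterval => u (α t) := hu.comp α.continuous
  set S : Set unitInterval := {t | φ t ∈ Set.Ioc (m:ℝ) (m+1)} with hS
  have hmemW : ∀ t : unitInterval, α t ∈ W → t ∈ S := by
    intro t ht
    obtain ⟨h1, h2, h3⟩ := hW _ ht
    constructor
    · show (m:ℝ) < φ t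
      rw [hφ]; simp only; rw [h1]; linarith
    · show φ t ≤ (m:ℝ) + 1
      rw [hφ]; simp only; rw [h1]; linarith
  have hSopen : IsOpen S := by
    rw [isOpen_iff_mem_nhds]
    intro t ht
    by_cases hW' : α t ∈ W
    · obtain ⟨h1, h2, h3⟩ := hW _ hW'
      have hIoo : φ t ∈ Set.Ioo (m:ℝ) (m+1) := by
        constructor
        · rw [hφ]; simp only; rw [h1]; linarith
        · rw [hφ]; simp only; rw [h1]; linarith
      have hU : φ ⁻¹' (Set.Ioo (m:ℝ) (m+1)) ∈ nhds t :=
        hφc.continuousAt.preimage_mem_nhds (isOpen_Ioo.mem_nhds hIoo)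
      exact Filter.mem_of_superset hU
        (fun s hs => ⟨hs.1, le_of_lt hs.2⟩)
    · obtain ⟨k, hk⟩ := hout _ hW'
      have hkval : (k:ℝ) = m + 1 := by
        have h1 : (m:ℝ) < k := by rw [← hk]; exact ht.1
        have h2 : (k:ℝ) ≤ m + 1 := by rw [← hk]; exact ht.2
        have h1' : m < k := by exact_mod_cast h1
        have h2' : k ≤ m + 1 := by exact_mod_cast h2
        have : k = m + 1 := by omega
        exact_mod_cast this
      have hφt : φ t = m + 1 := by rw [hφ]; simp only; rw [hk, hkval]
      have hIoo : φ t ∈ Set.Ioo ((m:ℝ) + 1/2) (m + 3/2) := by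
        rw [hφt]; constructor <;> [linarith; linarith]
      have hU : φ ⁻¹' (Set.Ioo ((m:ℝ) + 1/2) (m + 3/2)) ∈ nhds t :=
        hφc.continuousAt.preimage_mem_nhds (isOpen_Ioo.mem_nhds hIoo)
      refine Filter.mem_of_superset hU (fun s hs => ?_)
      by_cases hsW : α s ∈ W
      · exact hmemW s hsW
      · obtain ⟨k', hk'⟩ := hout _ hsW
        have h1 : ((m:ℝ) + 1/2) < k' := by
          rw [← hk']; exact hs.1
        have h2 : (k':ℝ) < m + 3/2 := by rw [← hk']; exact hs.2
        have hk'm : k' = m + 1 := by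
          have h1' : m + 1 ≤ k' := by
            by_contra hc
            push_neg at hc
            have : (k':ℝ) ≤ m := by exact_mod_cast Int.lt_add_one_iff.mp hc
            linarith
          have h2' : k' ≤ m + 1 := by
            by_contra hc
            push_neg at hc
            have h3 := Int.add_one_le_iff.mpr hc
            have : (m:ℝ) + 1 + 1 ≤ k' := by exact_mod_cast h3
            linarith
          omega
        constructor
        · show (m:ℝ) < φ s
          rw [hφ]; simp only; rw [hk', hk'm]; push_cast; linarith
        · show φ s ≤ (m:ℝ) + 1
          rw [hφ]; simp only; rw [hk', hk'm]; push_cast; linarith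
  have hSclosed : IsClosed S := by
    rw [← isSeqClosed_iff_isClosed]
    intro ts t hts hlim
    have hφlim : Filter.Tendsto (fun n => φ (ts n)) Filter.atTop (nhds (φ t)) :=
      (hφc.continuousAt.tendsto).comp hlim
    have hIcc : φ t ∈ Set.Icc (m:ℝ) (m+1) := by
      constructor
      · exact le_of_tendsto_of_tendsto' tendsto_const_nhds hφlim (fun n => le_of_lt (hts n).1)
      · exact le_of_tendsto_of_tendsto' hφlim tendsto_const_nhds (fun n => (hts n).2)
    rcases eq_or_lt_of_le hIcc.1 with heq | hlt
    · exfalso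
      -- φ t = m; derive u (α t) = 0
      have hev : ∀ᶠ n in Filter.atTop, φ (ts n) < m + 1/2 := by
        apply hφlim.eventually_lt tendsto_const_nhds
        rw [← heq]; linarith
      have hevW : ∀ᶠ n in Filter.atTop, α (ts n) ∈ W := by
        filter_upwards [hev] with n hn
        by_contra hc
        obtain ⟨k, hk⟩ := hout _ hc
        have h1 : (m:ℝ) < k := by rw [← hk]; exact (hts n).1
        have h1' : m < k := by exact_mod_cast h1
        have h2 : (k:ℝ) ≥ m + 1 := by exact_mod_cast h1'
        have : φ (ts n) ≥ (m:ℝ) + 1 := by rw [hφ]; simp only; rw [hk]; linarith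
        linarith
      have hulim : Filter.Tendsto (fun n => u (α (ts n))) Filter.atTop (nhds (u (α t))) :=
        (huc.continuousAt.tendsto).comp hlim
      have hulim0 : Filter.Tendsto (fun n => u (α (ts n))) Filter.atTop (nhds 0) := by
        have : Filter.Tendsto (fun n => φ (ts n) - m) Filter.atTop (nhds 0) := by
          have := hφlim.sub_const (m:ℝ)
          rw [← heq] at this
          simpa using this
        apply this.congr'
        filter_upwards [hevW] with n hn
        show φ (ts n) - (m:ℝ) = u (α (ts n))
        have : φ (ts n) = h (α (ts n)) := rfl
        rw [this, (hW _ hn).1]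
        ring
      have : u (α t) = 0 := tendsto_nhds_unique hulim hulim0
      exact hα t this
    · exact ⟨hlt, hIcc.2⟩
  have h0S : (0 : unitInterval) ∈ S := by
    have : α 0 = x := α.source
    apply hmemW
    rw [this]; exact hxW
  have hall : S = Set.univ := (isClopen_iff.mp ⟨hSclosed, hSopen⟩).resolve_left
    (Set.nonempty_iff_ne_empty.mp ⟨0, h0S⟩)
  have h1S : (1 : unitInterval) ∈ S := by rw [hall]; trivial
  have hφ1 : φ 1 = h y := by rw [hφ]; simp only; rw [α.target]
  obtain ⟨k, hk⟩ := hout _ hyW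
  have h1 : (m:ℝ) < k := by rw [← hk, ← hφ1]; exact h1S.1
  have h2 : (k:ℝ) ≤ m + 1 := by rw [← hk, ← hφ1]; exact h1S.2
  have h1' : m < k := by exact_mod_cast h1
  have h2' : k ≤ m + 1 := by exact_mod_cast h2
  have : k = m + 1 := by omega
  rw [hk, this]
  push_cast
  ring


/-- (Phragmén–Brouwer property of `ℝⁿ`.) Let `n ≥ 2`, let `A, B ⊆ ℝⁿ` be
disjoint closed sets, and let `x, y ∉ A ∪ B`. If `A ∪ B` separates `x` from `y`, then `A`
separates `x` from `y` or `B` separates `x` from `y`. -/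
theorem phragmen_brouwer {n : ℕ} (hn : 2 ≤ n) (A B : Set (En n))
    (hA : IsClosed A) (hB : IsClosed B) (hAB : Disjoint A B)
    (x y : En n) (hx : x ∉ A ∪ B) (hy : y ∉ A ∪ B)
    (hsep : y ∉ connectedComponentIn (A ∪ B)ᶜ x) :
    y ∉ connectedComponentIn Aᶜ x ∨ y ∉ connectedComponentIn Bᶜ x := by
  classical
  by_contra hcon
  push_neg at hcon
  obtain ⟨hA', hB'⟩ := hcon
  rcases Set.eq_empty_or_nonempty A with hAe | hAne
  · rw [hAe, Set.empty_union] at hsep; exact hsep hB'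
  rcases Set.eq_empty_or_nonempty B with hBe | hBne
  · rw [hBe, Set.union_empty] at hsep; exact hsep hA'
  have hx' : x ∈ (A ∪ B)ᶜ := hx
  have hxA : x ∈ Aᶜ := fun h => hx (Or.inl h)
  have hxB : x ∈ Bᶜ := fun h => hx (Or.inr h)
  set O : Set (En n) := (A ∪ B)ᶜ with hOdef
  have hO : IsOpen O := (hA.union hB).isOpen_compl
  set W : Set (En n) := connectedComponentIn O x with hWdef
  have hxW : x ∈ W := mem_connectedComponentIn hx'
  have hWopen : IsOpen W := hO.connectedComponentIn
  have hWconn : IsPreconnected W := isPreconnected_connectedComponentIn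
  have hWsub : W ⊆ O := connectedComponentIn_subset _ _
  have hyW : y ∉ W := hsep
  -- boundary of W is inside A ∪ B
  have hbd : ∀ z ∈ closure W, z ∈ O → z ∈ W := by
    intro z hz hzO
    obtain ⟨w, hw1, hw2⟩ := mem_closure_iff.mp hz _ hO.connectedComponentIn
      (mem_connectedComponentIn hzO)
    have e1 := connectedComponentIn_eq (F := O) (x := x) hw2
    have e2 := connectedComponentIn_eq (F := O) (x := z) hw1
    rw [hWdef, e1, ← e2]
    exact mem_connectedComponentIn hzO
  -- the Urysohn-type function u
  have hdenpos : ∀ z : En n, 0 < Metric.infDist z A + Metric.infDist z B := by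
    intro z
    rcases (lt_or_eq_of_le Metric.infDist_nonneg : (0:ℝ) < Metric.infDist z A ∨ _) with h | h
    · linarith [Metric.infDist_nonneg (s := B) (x := z)]
    rcases (lt_or_eq_of_le Metric.infDist_nonneg : (0:ℝ) < Metric.infDist z B ∨ _) with h' | h'
    · linarith [Metric.infDist_nonneg (s := A) (x := z)]
    exfalso
    have hzA : z ∈ A := (hA.mem_iff_infDist_zero hAne).mpr h.symm
    have hzB : z ∈ B := (hB.mem_iff_infDist_zero hBne).mpr h'.symm
    exact Set.disjoint_left.mp hAB hzA hzB
  set u : En n → ℝ := fun z => Metric.infDist z A / (Metric.infDist z A + Metric.infDist z B)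
    with hudef
  have hu : Continuous u := by
    apply (Metric.continuous_infDist_pt A).div
      ((Metric.continuous_infDist_pt A).add (Metric.continuous_infDist_pt B))
    intro z; exact ne_of_gt (hdenpos z)
  have hu0 : ∀ z, u z = 0 ↔ z ∈ A := by
    intro z
    rw [hudef]
    simp only
    rw [div_eq_zero_iff]
    constructor
    · rintro (h | h)
      · exact (hA.mem_iff_infDist_zero hAne).mpr h
      · exact absurd h (ne_of_gt (hdenpos z))
    · intro h; exact Or.inl ((hA.mem_iff_infDist_zero hAne).mp h)
  have hu1 : ∀ z, u z = 1 ↔ z ∈ B := by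
    intro z
    rw [hudef]
    simp only
    rw [div_eq_one_iff_eq (ne_of_gt (hdenpos z))]
    constructor
    · intro h
      have : Metric.infDist z B = 0 := by linarith
      exact (hB.mem_iff_infDist_zero hBne).mpr this
    · intro h
      have : Metric.infDist z B = 0 := (hB.mem_iff_infDist_zero hBne).mp h
      rw [this]; ring
  have hu01 : ∀ z, 0 ≤ u z ∧ u z ≤ 1 := by
    intro z
    constructor
    · apply div_nonneg Metric.infDist_nonneg (le_of_lt (hdenpos z))
    · rw [div_le_one (hdenpos z)]
      linarith [Metric.infDist_nonneg (s := B) (x := z)]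
  -- the circle-valued map f
  set e : En n → ℂ := fun z => Complex.exp (((2 * Real.pi * u z : ℝ) : ℂ) * Complex.I)
    with hedef
  have he_cont : Continuous e := by
    apply Complex.continuous_exp.comp
    exact (Complex.continuous_ofReal.comp (by fun_prop)).mul continuous_const
  set f : En n → ℂ := fun z => if z ∈ closure W then e z else 1 with hfdef
  have he1 : ∀ z, z ∈ closure W → z ∉ W → e z = 1 := by
    intro z hzc hzW
    have hzO : z ∉ O := fun h => hzW (hbd z hzc h)
    have hzAB : z ∈ A ∪ B := by
      by_contra h; exact hzO h
    rcases hzAB with h | h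
    · have : u z = 0 := (hu0 z).mpr h
      rw [hedef]; simp only; rw [this]
      norm_num
    · have : u z = 1 := (hu1 z).mpr h
      rw [hedef]; simp only; rw [this]
      have : ((2 * Real.pi * 1 : ℝ) : ℂ) * Complex.I = 2 * Real.pi * Complex.I := by
        push_cast; ring
      rw [this, Complex.exp_two_pi_mul_I]
  have hf_cont : Continuous f := by
    rw [continuous_iff_continuousAt]
    intro z
    by_cases hzW : z ∈ W
    · have hev : ∀ᶠ w in nhds z, e w = f w := by
        filter_upwards [hWopen.mem_nhds hzW] with w hw
        rw [hfdef]; simp only; rw [if_pos (subset_closure hw)]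
      exact he_cont.continuousAt.congr hev
    by_cases hzc : z ∈ closure W
    · have hez : e z = 1 := he1 z hzc hzW
      have hfz : f z = 1 := by rw [hfdef]; simp only; rw [if_pos hzc, hez]
      rw [ContinuousAt, hfz, tendsto_iff_dist_tendsto_zero]
      apply squeeze_zero (g := fun w => dist (e w) 1) (fun w => dist_nonneg)
      · intro w
        by_cases hw : w ∈ closure W
        · rw [hfdef]; simp only; rw [if_pos hw]
        · rw [hfdef]; simp only; rw [if_neg hw]; simp only [dist_self]; exact dist_nonneg
      · have h2 : Filter.Tendsto (fun w => dist (e w) 1) (nhds z) (nhds (dist (e z) 1)) :=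
          ((he_cont.dist continuous_const).tendsto z)
        rw [hez] at h2
        simpa using h2
    · have hev : ∀ᶠ w in nhds z, (1:ℂ) = f w := by
        filter_upwards [isClosed_closure.isOpen_compl.mem_nhds hzc] with w hw
        rw [hfdef]; simp only; rw [if_neg hw]
      exact continuousAt_const.congr hev
  have hf0 : ∀ z, f z ≠ 0 := by
    intro z
    rw [hfdef]; simp only
    split
    · exact Complex.exp_ne_zero _
    · exact one_ne_zero
  -- continuous logarithm
  obtain ⟨g, hg, hge⟩ := exists_contLog hf_cont hf0
  have hre : ∀ z, (g z).re = 0 := by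
    intro z
    have habs : ‖f z‖ = 1 := by
      rw [hfdef]; simp only
      split
      · rw [hedef]; simp only
        exact Complex.norm_exp_ofReal_mul_I _
      · simp
    have h1 : Real.exp ((g z).re) = 1 := by
      rw [← Complex.norm_exp, hge z]; exact habs
    simpa using h1
  set θ : En n → ℝ := fun z => (g z).im / (2 * Real.pi) with hθdef
  have hθ : Continuous θ := (Complex.continuous_im.comp hg).div_const _
  have hπ : (2 * Real.pi) ≠ 0 := by positivity
  have hkey : ∀ z, Complex.exp (((2 * Real.pi * θ z : ℝ) : ℂ) * Complex.I) = f z := by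
    intro z
    rw [← hge z]
    congr 1
    have h1 : g z = ((g z).im : ℂ) * Complex.I := by
      have h2 := Complex.re_add_im (g z)
      rw [hre z] at h2
      simp only [Complex.ofReal_zero, zero_add] at h2
      exact h2.symm
    rw [h1, hθdef]
    simp only
    congr 2
    push_cast
    field_simp
  -- comparison of θ with u
  have hcomp : ∀ z, z ∈ closure W → ∃ k : ℤ, θ z = u z + k := by
    intro z hz
    have h1 : Complex.exp (((2 * Real.pi * θ z : ℝ) : ℂ) * Complex.I)
        = Complex.exp (((2 * Real.pi * u z : ℝ) : ℂ) * Complex.I) := by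
      rw [hkey z, hfdef]; simp only; rw [if_pos hz, hedef]
    obtain ⟨k, hk⟩ := Complex.exp_eq_exp_iff_exists_int.mp h1
    refine ⟨k, ?_⟩
    have hk' : ((2 * Real.pi * θ z : ℝ) : ℂ) * Complex.I
        = ((2 * Real.pi * u z + k * (2 * Real.pi) : ℝ) : ℂ) * Complex.I := by
      rw [hk]; push_cast; ring
    have h3 : (2 * Real.pi * θ z : ℝ) = 2 * Real.pi * u z + k * (2 * Real.pi) := by
      have := mul_right_cancel₀ Complex.I_ne_zero hk'
      exact_mod_cast this
    apply mul_left_cancel₀ hπ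
    rw [h3]; ring
  have hout : ∀ z, z ∉ W → ∃ k : ℤ, θ z = k := by
    intro z hz
    by_cases hzc : z ∈ closure W
    · obtain ⟨k, hk⟩ := hcomp z hzc
      have hzO : z ∉ O := fun h => hz (hbd z hzc h)
      have hzAB : z ∈ A ∪ B := by by_contra h; exact hzO h
      rcases hzAB with h | h
      · exact ⟨k, by rw [hk, (hu0 z).mpr h]; simp⟩
      · exact ⟨k + 1, by rw [hk, (hu1 z).mpr h]; push_cast; ring⟩
    · have h1 : Complex.exp (((2 * Real.pi * θ z : ℝ) : ℂ) * Complex.I) = 1 := by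
        rw [hkey z, hfdef]; simp only; rw [if_neg hzc]
      obtain ⟨k, hk⟩ := Complex.exp_eq_one_iff.mp h1
      refine ⟨k, ?_⟩
      have hk' : ((2 * Real.pi * θ z : ℝ) : ℂ) * Complex.I
          = ((k * (2 * Real.pi) : ℝ) : ℂ) * Complex.I := by
        rw [hk]; push_cast; ring
      have h3 : (2 * Real.pi * θ z : ℝ) = k * (2 * Real.pi) := by
        have := mul_right_cancel₀ Complex.I_ne_zero hk'
        exact_mod_cast this
      apply mul_left_cancel₀ hπ
      rw [h3]; ring
  -- u strictly between 0 and 1 on W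
  have hWvals : ∀ z ∈ W, 0 < u z ∧ u z < 1 := by
    intro z hz
    have hzO : z ∈ O := hWsub hz
    have hzA : z ∉ A := fun h => hzO (Or.inl h)
    have hzB : z ∉ B := fun h => hzO (Or.inr h)
    constructor
    · rcases lt_or_eq_of_le (hu01 z).1 with h | h
      · exact h
      · exact absurd ((hu0 z).mp h.symm) hzA
    · rcases lt_or_eq_of_le (hu01 z).2 with h | h
      · exact h
      · exact absurd ((hu1 z).mp h) hzB
  -- θ = u + m on W
  obtain ⟨m, hmx⟩ := hcomp x (subset_closure hxW)
  have hm : ∀ z ∈ W, θ z = u z + m := by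
    intro z hz
    have hint : ∀ w ∈ W, ∃ k : ℤ, θ w - u w = (k:ℝ) := by
      intro w hw
      obtain ⟨k, hk⟩ := hcomp w (subset_closure hw)
      exact ⟨k, by rw [hk]; ring⟩
    have := intValued_apply_eq hWconn ((hθ.sub hu).continuousOn) hint hxW hz
    have h2 : θ z - u z = θ x - u x := this
    rw [hmx] at h2
    linarith [h2]
  -- paths avoiding A and B respectively
  have hpcA : IsPathConnected (connectedComponentIn Aᶜ x) :=
    ((hA.isOpen_compl.connectedComponentIn (x := x)).isConnected_iff_isPathConnected).mp
      (isConnected_connectedComponentIn_iff.mpr hxA)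
  have hpcB : IsPathConnected (connectedComponentIn Bᶜ x) :=
    ((hB.isOpen_compl.connectedComponentIn (x := x)).isConnected_iff_isPathConnected).mp
      (isConnected_connectedComponentIn_iff.mpr hxB)
  obtain ⟨α, hα⟩ := hpcA.joinedIn x (mem_connectedComponentIn hxA) y hA'
  obtain ⟨β, hβ⟩ := hpcB.joinedIn x (mem_connectedComponentIn hxB) y hB'
  -- apply the crossing lemma twice
  have hcross1 : θ y = (m:ℝ) + 1 := by
    apply cross_lemma hu hθ (W := W) (m := m)
      (fun z hz => ⟨hm z hz, (hWvals z hz).1, (hWvals z hz).2⟩) hout hxW hyW α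
    intro t h0
    exact (connectedComponentIn_subset Aᶜ x (hα t)) ((hu0 _).mp h0)
  have hcross2 : -θ y = ((-m-1 : ℤ):ℝ) + 1 := by
    apply cross_lemma (u := fun z => 1 - u z) (h := fun z => -θ z)
      (continuous_const.sub hu) hθ.neg (W := W) (m := -m-1)
      (fun z hz => ⟨by show -θ z = (1 - u z) + ((-m-1 : ℤ):ℝ); rw [hm z hz]; push_cast; ring,
        by show (0:ℝ) < 1 - u z; linarith [(hWvals z hz).2],
        by show (1:ℝ) - u z < 1; linarith [(hWvals z hz).1]⟩)
      (fun z hz => by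
        obtain ⟨k, hk⟩ := hout z hz
        exact ⟨-k, by show -θ z = ((-k : ℤ):ℝ); rw [hk]; push_cast; ring⟩)
      hxW hyW β
    intro t h0
    have : u (β t) = 1 := by linarith [sub_eq_zero.mp h0]
    exact (connectedComponentIn_subset Bᶜ x (hβ t)) ((hu1 _).mp this)
  push_cast at hcross1 hcross2
  linarith
end
end
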